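/- The odd extension F : [-1,1] → C([0,1],ℝ) of f (F(x) = f(x) for x ≥ 0, F(x) = −f(−x) for x < 0) is continuous and its Bochner integral over [-1,1] is the zero function, which is a polynomial; thus ∫_{[-1,1]} F lies in the subspace E of polynomial functions while ∫_{[0,1]} F does not. -/

import Mathlib

/-- The monomial `t ↦ t^n` as an element of `C([0,1], ℝ)`. -/
def eFun (n : ℕ) : C(Set.Icc (0:ℝ) 1, ℝ) :=
  ⟨fun t => (t : ℝ) ^ n, (continuous_subtype_val.pow n)⟩

open MeasureTheory

section helpersSection
open Set MeasureTheory intervalIntegral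

lemma glueCO {E : Type*} [TopologicalSpace E] {f : ℝ → E} {s t : Set ℝ} (hs : IsClosed s)
    (ht : IsClosed t) (h1 : ContinuousOn f s) (h2 : ContinuousOn f t) :
    ContinuousOn f (s ∪ t) := by
  intro x hx
  apply ContinuousWithinAt.union
  · by_cases h : x ∈ s
    · exact h1 x h
    · exact continuousWithinAt_of_notMem_closure (by rwa [hs.closure_eq])
  · by_cases h : x ∈ t
    · exact h2 x h
    · exact continuousWithinAt_of_notMem_closure (by rwa [ht.closure_eq])

lemma half_anti {m n : ℕ} (h : m ≤ n) : (1:ℝ)/2^n ≤ 1/2^m :=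
  one_div_le_one_div_of_le (by positivity) (pow_le_pow_right₀ (by norm_num) h)

lemma half_anti_strict {m n : ℕ} (h : m < n) : (1:ℝ)/2^n < 1/2^m :=
  one_div_lt_one_div_of_lt (by positivity) (pow_lt_pow_right₀ (by norm_num) h)

lemma lt_bm (n : ℕ) : (1:ℝ)/2^(n+1) < 3/2^(n+2) := by
  rw [div_lt_div_iff₀ (by positivity) (by positivity), pow_succ]
  nlinarith [pow_pos (by norm_num : (0:ℝ) < 2) (n+1)]

lemma lt_md (n : ℕ) : (3:ℝ)/2^(n+2) < 1/2^n := by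
  rw [div_lt_div_iff₀ (by positivity) (by positivity), pow_add]
  nlinarith [pow_pos (by norm_num : (0:ℝ) < 2) n]

lemma exists_dyadic {y : ℝ} (h0 : 0 < y) (h1 : y ≤ 1) :
    ∃ n : ℕ, y ∈ Set.Ioc ((1:ℝ)/2^(n+1)) (1/2^n) := by
  have hex : ∃ k : ℕ, (1:ℝ)/2^(k+1) < y := by
    obtain ⟨k, hk⟩ := exists_pow_lt_of_lt_one h0 (by norm_num : (1:ℝ)/2 < 1)
    refine ⟨k, lt_of_le_of_lt ?_ hk⟩
    rw [div_pow, one_pow]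
    exact half_anti (Nat.le_succ k)
  let n := Nat.find hex
  refine ⟨n, Nat.find_spec hex, ?_⟩
  rcases Nat.eq_zero_or_pos n with hn | hn
  · rw [hn]; simpa using h1
  · have hmin := Nat.find_min hex (m := n - 1) (Nat.sub_lt hn one_pos)
    push_neg at hmin
    calc y ≤ 1/2^(n-1+1) := hmin
    _ = 1/2^n := by rw [Nat.sub_add_cancel hn]


lemma eFun_norm_le (n : ℕ) : ‖eFun n‖ ≤ 1 := by
  refine (ContinuousMap.norm_le _ zero_le_one).mpr fun t => ?_
  simp only [eFun, ContinuousMap.coe_mk, Real.norm_eq_abs]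
  rw [abs_of_nonneg (pow_nonneg t.2.1 n)]
  exact pow_le_one₀ t.2.1 t.2.2

lemma eFun_apply (n : ℕ) (t : Set.Icc (0:ℝ) 1) : eFun n t = (t:ℝ)^n := rfl

section main
variable {f : ℝ → C(Set.Icc (0:ℝ) 1, ℝ)}
variable (h0 : f 0 = 0)
variable (h1 : ∀ n : ℕ, ∀ x ∈ Set.Icc ((1:ℝ) / 2 ^ (n + 1)) (3 / 2 ^ (n + 2)),
      f x = ((2 ^ (2 * n + 4) / (n.factorial : ℝ)) * (x - 1 / 2 ^ (n + 1))) • eFun n)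
variable (h2 : ∀ n : ℕ, ∀ x ∈ Set.Icc ((3:ℝ) / 2 ^ (n + 2)) (1 / 2 ^ n),
      f x = ((2 ^ (2 * n + 4) / (n.factorial : ℝ)) * (1 / 2 ^ n - x)) • eFun n)

include h1 h2 in
lemma contI (n : ℕ) : ContinuousOn f (Icc ((1:ℝ)/2^(n+1)) (1/2^n)) := by
  rw [← Icc_union_Icc_eq_Icc (lt_bm n).le (lt_md n).le]
  apply glueCO isClosed_Icc isClosed_Icc
  · exact ContinuousOn.congr (Continuous.continuousOn (by fun_prop)) (h1 n)
  · exact ContinuousOn.congr (Continuous.continuousOn (by fun_prop)) (h2 n)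

include h1 h2 in
lemma contChain : ∀ n : ℕ, ContinuousOn f (Icc ((1:ℝ)/2^(n+1)) 1) := by
  intro n
  induction n with
  | zero => simpa using contI h1 h2 0
  | succ n ih =>
    have he : Icc ((1:ℝ)/2^(n+2)) (1/2^(n+1)) ∪ Icc ((1:ℝ)/2^(n+1)) 1 =
        Icc ((1:ℝ)/2^(n+2)) 1 := by
      apply Icc_union_Icc_eq_Icc (half_anti (by omega))
      calc (1:ℝ)/2^(n+1) ≤ 1/2^0 := half_anti (by omega)
      _ = 1 := by norm_num
    rw [← he]
    exact glueCO isClosed_Icc isClosed_Icc (contI h1 h2 (n+1)) ih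

include h1 h2 in
lemma hbound (n : ℕ) : ∀ y ∈ Icc ((1:ℝ)/2^(n+1)) (1/2^n), ‖f y‖ ≤ 2^(n+2) / n.factorial := by
  intro y hy
  have hfac : (0:ℝ) < n.factorial := by positivity
  have hcle : ∀ c : ℝ, |c| ≤ 2^(n+2)/n.factorial → ‖c • eFun n‖ ≤ 2^(n+2)/n.factorial := by
    intro c hc
    calc ‖c • eFun n‖ ≤ ‖c‖ * ‖eFun n‖ := norm_smul_le c (eFun n)
    _ ≤ (2^(n+2)/n.factorial) * 1 := by
          apply mul_le_mul hc (eFun_norm_le n) (norm_nonneg _) (by positivity)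
    _ = 2^(n+2)/n.factorial := mul_one _
  rcases le_total y ((3:ℝ)/2^(n+2)) with hc | hc
  · rw [h1 n y ⟨hy.1, hc⟩]
    apply hcle
    have hnn : (0:ℝ) ≤ y - 1/2^(n+1) := by linarith [hy.1]
    rw [abs_of_nonneg (by positivity)]
    have : y - 1/2^(n+1) ≤ 1/2^(n+2) := by
      have : (3:ℝ)/2^(n+2) - 1/2^(n+1) = 1/2^(n+2) := by
        field_simp; ring
      linarith
    calc 2 ^ (2*n+4) / (n.factorial:ℝ) * (y - 1/2^(n+1))
        ≤ 2 ^ (2*n+4) / (n.factorial:ℝ) * (1/2^(n+2)) := by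
          apply mul_le_mul_of_nonneg_left this (by positivity)
    _ = 2^(n+2)/n.factorial := by
          field_simp
          ring
  · rw [h2 n y ⟨hc, hy.2⟩]
    apply hcle
    have hnn : (0:ℝ) ≤ 1/2^n - y := by linarith [hy.2]
    rw [abs_of_nonneg (by positivity)]
    have : 1/2^n - y ≤ 1/2^(n+2) := by
      have : (1:ℝ)/2^n - 3/2^(n+2) = 1/2^(n+2) := by
        field_simp; ring
      linarith
    calc 2 ^ (2*n+4) / (n.factorial:ℝ) * (1/2^n - y)
        ≤ 2 ^ (2*n+4) / (n.factorial:ℝ) * (1/2^(n+2)) := by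
          apply mul_le_mul_of_nonneg_left this (by positivity)
    _ = 2^(n+2)/n.factorial := by
          field_simp
          ring

include h0 h1 h2 in
lemma contf : ContinuousOn f (Icc (0:ℝ) 1) := by
  intro x hx
  rcases eq_or_lt_of_le hx.1 with hx0 | hx0
  · -- continuity at 0
    subst hx0
    rw [ContinuousWithinAt, h0]
    rw [Metric.tendsto_nhdsWithin_nhds]
    intro ε hε
    have htend : Filter.Tendsto (fun n : ℕ => 4 * ((2:ℝ)^n / n.factorial)) Filter.atTop (nhds 0) := by
      have := FloorSemiring.tendsto_pow_div_factorial_atTop (2:ℝ)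
      simpa using this.const_mul 4
    obtain ⟨N, hN⟩ := (Filter.eventually_atTop).mp (htend.eventually (gt_mem_nhds hε))
    refine ⟨1/2^N, by positivity, ?_⟩
    intro y hy hdy
    rw [Real.dist_eq, sub_zero] at hdy
    rw [dist_eq_norm, sub_zero]
    rcases eq_or_lt_of_le hy.1 with hy0 | hy0
    · rw [← hy0, h0]; simpa using hε
    · obtain ⟨n, hn⟩ := exists_dyadic hy0 hy.2
      have hyabs : y < 1/2^N := lt_of_abs_lt hdy
      have hnN : N ≤ n := by
        by_contra hcon
        push_neg at hcon
        have : (1:ℝ)/2^N ≤ 1/2^(n+1) := half_anti (by omega)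
        linarith [hn.1]
      calc ‖f y‖ ≤ 2^(n+2)/n.factorial := hbound h1 h2 n y ⟨hn.1.le, hn.2⟩
      _ = 4 * ((2:ℝ)^n / n.factorial) := by rw [pow_add]; ring
      _ < ε := hN n hnN
  · -- continuity at x > 0
    obtain ⟨n, hn⟩ := exists_dyadic hx0 hx.2
    have hcw : ContinuousWithinAt f (Icc ((1:ℝ)/2^(n+2)) 1) x := by
      apply contChain h1 h2 (n+1)
      constructor
      · calc (1:ℝ)/2^(n+2) ≤ 1/2^(n+1) := half_anti (by omega)
        _ ≤ x := hn.1.le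
      · exact hx.2
    apply hcw.mono_of_mem_nhdsWithin
    rw [mem_nhdsWithin]
    refine ⟨Ioi ((1:ℝ)/2^(n+2)), isOpen_Ioi, ?_, ?_⟩
    · calc (1:ℝ)/2^(n+2) < 1/2^(n+1) := half_anti_strict (by omega)
      _ < x := hn.1
    · rintro z ⟨hz1, hz2⟩
      exact ⟨le_of_lt hz1, hz2.2⟩

include h1 h2 in
lemma intB (n : ℕ) : (∫ x in ((1:ℝ)/2^(n+1))..((1:ℝ)/2^n), f x)
    = ((n.factorial:ℝ)⁻¹) • eFun n := by
  have hfac : (n.factorial:ℝ) ≠ 0 := by positivity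
  have hbm := (lt_bm n).le
  have hmd := (lt_md n).le
  have hsub1 : Icc ((1:ℝ)/2^(n+1)) (3/2^(n+2)) ⊆ Icc ((1:ℝ)/2^(n+1)) (1/2^n) :=
    Icc_subset_Icc le_rfl hmd
  have hsub2 : Icc ((3:ℝ)/2^(n+2)) (1/2^n) ⊆ Icc ((1:ℝ)/2^(n+1)) (1/2^n) :=
    Icc_subset_Icc hbm le_rfl
  have i1 : IntervalIntegrable f volume ((1:ℝ)/2^(n+1)) (3/2^(n+2)) :=
    (((contI h1 h2 n).mono hsub1)).intervalIntegrable_of_Icc hbm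
  have i2 : IntervalIntegrable f volume ((3:ℝ)/2^(n+2)) (1/2^n) :=
    (((contI h1 h2 n).mono hsub2)).intervalIntegrable_of_Icc hmd
  rw [← integral_add_adjacent_intervals i1 i2]
  have e1 : (∫ x in ((1:ℝ)/2^(n+1))..((3:ℝ)/2^(n+2)), f x)
      = (1/(2*(n.factorial:ℝ))) • eFun n := by
    rw [integral_congr (g := fun x => ((2 ^ (2 * n + 4) / (n.factorial : ℝ))
        * (x - 1 / 2 ^ (n + 1))) • eFun n) (by rw [uIcc_of_le hbm]; exact fun x hx => h1 n x hx)]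
    rw [intervalIntegral.integral_smul_const]
    congr 1
    rw [intervalIntegral.integral_const_mul,
        intervalIntegral.integral_sub intervalIntegrable_id (intervalIntegrable_const),
        integral_id, intervalIntegral.integral_const]
    field_simp
    ring_nf
    rw [inv_pow, show (2:ℝ)^(n*7) = 2^(n*3)*2^(n*4) by ring]
    field_simp
    ring
  have e2 : (∫ x in ((3:ℝ)/2^(n+2))..((1:ℝ)/2^n), f x)
      = (1/(2*(n.factorial:ℝ))) • eFun n := by
    rw [integral_congr (g := fun x => ((2 ^ (2 * n + 4) / (n.factorial : ℝ))
        * (1 / 2 ^ n - x)) • eFun n) (by rw [uIcc_of_le hmd]; exact fun x hx => h2 n x hx)]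
    rw [intervalIntegral.integral_smul_const]
    congr 1
    rw [intervalIntegral.integral_const_mul,
        intervalIntegral.integral_sub intervalIntegrable_const intervalIntegrable_id,
        integral_id, intervalIntegral.integral_const]
    field_simp
    ring_nf
    rw [inv_pow, show (2:ℝ)^(n*7) = 2^(n*3)*2^(n*4) by ring]
    field_simp
    ring
  rw [e1, e2, ← add_smul]
  congr 1
  field_simp
  norm_num

include h0 h1 h2 in
lemma hval (t : Set.Icc (0:ℝ) 1) :
    (∫ x in (0:ℝ)..1, f x) t = Real.exp t := by
  have contf' : ContinuousOn f (Icc (0:ℝ) 1) := contf h0 h1 h2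
  set L : C(Set.Icc (0:ℝ) 1, ℝ) →L[ℝ] ℝ := ContinuousMap.evalCLM ℝ t with hL
  have hint : IntervalIntegrable f volume 0 1 := contf'.intervalIntegrable_of_Icc zero_le_one
  have h1' : (∫ x in (0:ℝ)..1, f x) t = ∫ x in (0:ℝ)..1, (f x) t :=
    (L.intervalIntegral_comp_comm hint).symm
  rw [h1', integral_of_le zero_le_one]
  have hU : Ioc (0:ℝ) 1 = ⋃ n : ℕ, Ioc ((1:ℝ)/2^(n+1)) (1/2^n) := by
    ext y
    simp only [mem_Ioc, mem_iUnion]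
    constructor
    · rintro ⟨hy0, hy1⟩
      obtain ⟨n, hn⟩ := exists_dyadic hy0 hy1
      exact ⟨n, hn.1, hn.2⟩
    · rintro ⟨n, hn1, hn2⟩
      refine ⟨lt_trans (by positivity) hn1, le_trans hn2 ?_⟩
      calc (1:ℝ)/2^n ≤ 1/2^0 := half_anti (Nat.zero_le n)
      _ = 1 := by norm_num
  have contg : ContinuousOn (fun x => (f x) t) (Icc (0:ℝ) 1) :=
    L.continuous.comp_continuousOn contf'
  have hintg : IntegrableOn (fun x => (f x) t) (⋃ n : ℕ, Ioc ((1:ℝ)/2^(n+1)) (1/2^n)) volume := by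
    rw [← hU]
    exact (contg.integrableOn_Icc).mono_set Ioc_subset_Icc_self
  have hdisj : Pairwise (Function.onFun Disjoint (fun n : ℕ => Ioc ((1:ℝ)/2^(n+1)) (1/2^n))) := by
    intro m n hmn
    rw [Function.onFun, Set.Ioc_disjoint_Ioc]
    rcases hmn.lt_or_gt with h | h
    · calc min ((1:ℝ)/2^m) (1/2^n) ≤ 1/2^n := min_le_right _ _
      _ ≤ 1/2^(m+1) := half_anti (by omega)
      _ ≤ max ((1:ℝ)/2^(m+1)) (1/2^(n+1)) := le_max_left _ _
    · calc min ((1:ℝ)/2^m) (1/2^n) ≤ 1/2^m := min_le_left _ _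
      _ ≤ 1/2^(n+1) := half_anti (by omega)
      _ ≤ max ((1:ℝ)/2^(m+1)) (1/2^(n+1)) := le_max_right _ _
  rw [hU, integral_iUnion (fun _ => measurableSet_Ioc) hdisj hintg]
  have hterm : ∀ n : ℕ, (∫ x in Ioc ((1:ℝ)/2^(n+1)) (1/2^n), (f x) t)
      = (t:ℝ)^n / n.factorial := by
    intro n
    have hbd : ((1:ℝ)/2^(n+1)) ≤ 1/2^n := half_anti (Nat.le_succ n)
    have hintn : IntervalIntegrable f volume ((1:ℝ)/2^(n+1)) (1/2^n) :=
      (contI h1 h2 n).intervalIntegrable_of_Icc hbd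
    rw [← integral_of_le hbd]
    have hcomm := L.intervalIntegral_comp_comm hintn
    show (∫ x in ((1:ℝ)/2^(n+1))..((1:ℝ)/2^n), L (f x)) = _
    rw [hcomm, intB h1 h2 n]
    show (((n.factorial:ℝ)⁻¹) • eFun n) t = (t:ℝ)^n / n.factorial
    rw [ContinuousMap.smul_apply, eFun_apply]
    rw [smul_eq_mul]
    ring
  rw [tsum_congr hterm]
  rw [Real.exp_eq_exp_ℝ, NormedSpace.exp_eq_tsum_div]

end main

lemma exp_ne_poly (p : Polynomial ℝ) (hp : ∀ x ∈ Icc (0:ℝ) 1, Real.exp x = p.eval x) :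
    False := by
  have key : ∀ k : ℕ, ∀ x ∈ Ioo (0:ℝ) 1,
      Real.exp x = ((Polynomial.derivative (R := ℝ))^[k] p).eval x := by
    intro k
    induction k with
    | zero => exact fun x hx => hp x (Ioo_subset_Icc_self hx)
    | succ k ih =>
      intro x hx
      have hev : Real.exp =ᶠ[nhds x]
          (fun y => ((Polynomial.derivative (R := ℝ))^[k] p).eval y) :=
        Filter.eventuallyEq_of_mem (isOpen_Ioo.mem_nhds hx) ih
      have hde := hev.deriv_eq
      rw [Real.deriv_exp, Polynomial.deriv] at hde
      rw [Function.iterate_succ_apply']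
      exact hde
  have h12 : (1/2 : ℝ) ∈ Ioo (0:ℝ) 1 := by norm_num
  have := key (p.natDegree + 1) (1/2) h12
  rw [Polynomial.iterate_derivative_eq_zero (Nat.lt_succ_self _)] at this
  simp only [Polynomial.eval_zero] at this
  exact (Real.exp_pos _).ne' this


end helpersSection

section mainSection
open Set MeasureTheory intervalIntegral

/-- The odd extension `F` of the tent construction is continuous on `[-1,1]`, its
Bochner integral over `[-1,1]` is the zero function (a polynomial), while its
integral over `[0,1]` is not a polynomial function. -/
theorem odd_extension_integral (f F : ℝ → C(Set.Icc (0:ℝ) 1, ℝ))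
    (h0 : f 0 = 0)
    (h1 : ∀ n : ℕ, ∀ x ∈ Set.Icc ((1:ℝ) / 2 ^ (n + 1)) (3 / 2 ^ (n + 2)),
      f x = ((2 ^ (2 * n + 4) / (n.factorial : ℝ)) * (x - 1 / 2 ^ (n + 1))) • eFun n)
    (h2 : ∀ n : ℕ, ∀ x ∈ Set.Icc ((3:ℝ) / 2 ^ (n + 2)) (1 / 2 ^ n),
      f x = ((2 ^ (2 * n + 4) / (n.factorial : ℝ)) * (1 / 2 ^ n - x)) • eFun n)
    (hF1 : ∀ x ∈ Set.Icc (0:ℝ) 1, F x = f x)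
    (hF2 : ∀ x ∈ Set.Icc (-1:ℝ) 0, F x = - f (-x)) :
    ContinuousOn F (Set.Icc (-1) 1) ∧
    (∫ x in (-1:ℝ)..1, F x) = 0 ∧
    (∃ p : Polynomial ℝ, ∀ t : Set.Icc (0:ℝ) 1,
        (∫ x in (-1:ℝ)..1, F x) t = p.eval (t : ℝ)) ∧
    ¬ ∃ p : Polynomial ℝ, ∀ t : Set.Icc (0:ℝ) 1,
        (∫ x in (0:ℝ)..1, F x) t = p.eval (t : ℝ) := by
  have contf' : ContinuousOn f (Set.Icc (0:ℝ) 1) := contf h0 h1 h2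
  have hcontF : ContinuousOn F (Set.Icc (-1:ℝ) 1) := by
    rw [show Set.Icc (-1:ℝ) 1 = Set.Icc (-1:ℝ) 0 ∪ Set.Icc (0:ℝ) 1 from
      (Set.Icc_union_Icc_eq_Icc (by norm_num) (by norm_num)).symm]
    apply glueCO isClosed_Icc isClosed_Icc
    · have hmaps : Set.MapsTo (fun x : ℝ => -x) (Set.Icc (-1:ℝ) 0) (Set.Icc (0:ℝ) 1) := by
        intro x hx
        constructor
        · show (0:ℝ) ≤ -x; linarith [hx.2]
        · show -x ≤ (1:ℝ); linarith [hx.1]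
      have hcn : ContinuousOn (fun x => -f (-x)) (Set.Icc (-1:ℝ) 0) :=
        (contf'.comp (continuous_neg.continuousOn) hmaps).neg
      exact hcn.congr fun x hx => hF2 x hx
    · exact contf'.congr fun x hx => hF1 x hx
  have hiF1 : IntervalIntegrable F volume 0 1 :=
    (hcontF.mono (Icc_subset_Icc (by norm_num) le_rfl)).intervalIntegrable_of_Icc zero_le_one
  have hiF2 : IntervalIntegrable F volume (-1) 0 :=
    (hcontF.mono (Icc_subset_Icc le_rfl (by norm_num))).intervalIntegrable_of_Icc (by norm_num)
  have hpos : (∫ x in (0:ℝ)..1, F x) = ∫ x in (0:ℝ)..1, f x :=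
    integral_congr (by rw [uIcc_of_le zero_le_one]; exact fun x hx => hF1 x hx)
  have hneg : (∫ x in (-1:ℝ)..0, F x) = - ∫ x in (0:ℝ)..1, f x := by
    rw [integral_congr (g := fun x => -f (-x))
        (by rw [uIcc_of_le (by norm_num : (-1:ℝ) ≤ 0)]; exact fun x hx => hF2 x hx)]
    rw [intervalIntegral.integral_neg]
    congr 1
    have hcn := intervalIntegral.integral_comp_neg (a := (-1:ℝ)) (b := 0) (f := f)
    rw [show (-(0:ℝ)) = 0 by norm_num, show (-(-1:ℝ)) = 1 by norm_num] at hcn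
    exact hcn
  have hzero : (∫ x in (-1:ℝ)..1, F x) = 0 := by
    rw [← integral_add_adjacent_intervals hiF2 hiF1, hpos, hneg]
    abel
  refine ⟨hcontF, hzero, ⟨0, fun t => by rw [hzero]; simp⟩, ?_⟩
  rintro ⟨p, hp⟩
  apply exp_ne_poly p
  intro x hx
  have h' := hp ⟨x, hx⟩
  rw [hpos] at h'
  calc Real.exp x = (∫ x in (0:ℝ)..1, f x) ⟨x, hx⟩ := (hval h0 h1 h2 ⟨x, hx⟩).symm
  _ = p.eval x := h'

end mainSection
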